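/- Assume A is an integral domain and let G_ω be a weighted graph. The associated primes of the R-module R/I(G_ω) are exactly the ideals P(V') such that (V', δ') is a minimal weighted vertex cover of G_ω for some function δ' : V' → ℕ. -/

import Mathlib

open MvPolynomial

/-- `(S, δ)` is a weighted vertex cover of the weighted graph `(G, w)`:
`δ` takes positive values on `S`, and every edge `{i, j}` is covered by an
endpoint lying in `S` whose weight is at most the weight of the edge. -/
def IsWVC {V : Type*} (G : SimpleGraph V) (w : Sym2 V → ℕ) (S : Finset V) (δ : V → ℕ) : Prop :=
  (∀ v ∈ S, 1 ≤ δ v) ∧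
    ∀ i j, G.Adj i j → (i ∈ S ∧ δ i ≤ w s(i, j)) ∨ (j ∈ S ∧ δ j ≤ w s(i, j))

/-- The order on weighted vertex covers: `(S', δ') ≤ (S, δ)` iff `S' ⊆ S` and
`δ v ≤ δ' v` for all `v ∈ S'`. -/
def WVCle {V : Type*} (S' : Finset V) (δ' : V → ℕ) (S : Finset V) (δ : V → ℕ) : Prop :=
  S' ⊆ S ∧ ∀ v ∈ S', δ v ≤ δ' v

/-- Minimal weighted vertex cover. -/
def IsMinWVC {V : Type*} (G : SimpleGraph V) (w : Sym2 V → ℕ) (S : Finset V) (δ : V → ℕ) :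
    Prop :=
  IsWVC G w S δ ∧ ∀ T ε, IsWVC G w T ε → WVCle T ε S δ → WVCle S δ T ε

/-- A weighted graph is unmixed if all its minimal weighted vertex covers have
the same cardinality. -/
def WUnmixed {V : Type*} (G : SimpleGraph V) (w : Sym2 V → ℕ) : Prop :=
  ∀ S δ T ε, IsMinWVC G w S δ → IsMinWVC G w T ε → S.card = T.card

/-- vertex cover of an (unweighted) graph. -/
def IsVC {V : Type*} (G : SimpleGraph V) (S : Finset V) : Prop :=
  ∀ i j, G.Adj i j → i ∈ S ∨ j ∈ S

def IsMinVC {V : Type*} (G : SimpleGraph V) (S : Finset V) : Prop :=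
  IsVC G S ∧ ∀ T, IsVC G T → T ⊆ S → T = S

def Unmixed {V : Type*} (G : SimpleGraph V) : Prop :=
  ∀ S T, IsMinVC G S → IsMinVC G T → S.card = T.card

/-- The weighted edge ideal. -/
noncomputable def wEdgeIdeal (A : Type*) [CommRing A] {V : Type*} (G : SimpleGraph V)
    (w : Sym2 V → ℕ) : Ideal (MvPolynomial V A) :=
  Ideal.span {m | ∃ i j, G.Adj i j ∧ m = X i ^ w s(i, j) * X j ^ w s(i, j)}

/-- The m-irreducible ideal `P(S, δ)` generated by the pure powers `Xᵥ^(δ v)`, `v ∈ S`. -/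
noncomputable def PIdeal (A : Type*) [CommRing A] {V : Type*} (S : Finset V) (δ : V → ℕ) :
    Ideal (MvPolynomial V A) :=
  Ideal.span {m | ∃ v ∈ S, m = X v ^ δ v}

/-- The monomial prime `P(S)` generated by the variables `Xᵥ`, `v ∈ S`. -/
noncomputable def PPrime (A : Type*) [CommRing A] {V : Type*} (S : Finset V) :
    Ideal (MvPolynomial V A) :=
  Ideal.span {m | ∃ v ∈ S, m = X v}

set_option synthInstance.maxHeartbeats 1000000 in
/-- Cohen-Macaulayness of the quotient of a polynomial ring over a field by a
(monomial, hence graded) ideal `I`: there is a regular sequence on `R ⧸ I`,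
consisting of elements of the image of the irrelevant maximal ideal, whose
length equals the Krull dimension of `R ⧸ I` (i.e. `depth = dim`). -/
def QuotIsCM (A : Type*) [Field A] {V : Type*} (I : Ideal (MvPolynomial V A)) : Prop :=
  ∃ rs : List (MvPolynomial V A ⧸ I),
    (∀ x ∈ rs, x ∈ (Ideal.span (Set.range (X : V → MvPolynomial V A))).map
      (Ideal.Quotient.mk I)) ∧
    RingTheory.Sequence.IsRegular (MvPolynomial V A ⧸ I) rs ∧
    (rs.length : WithBot (WithTop ℕ)) = ringKrullDim (MvPolynomial V A ⧸ I)

/-- The cycle graph on `Fin n`. -/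
def cycleG (n : ℕ) : SimpleGraph (Fin n) := SimpleGraph.fromRel (fun i j => (j : ℕ) = ((i : ℕ) + 1) % n)

/-- The path graph on `Fin n`, with edges `v_i v_{i+1}`. -/
def pathG (n : ℕ) : SimpleGraph (Fin n) :=
  SimpleGraph.fromRel (fun i j => (i : ℕ) + 1 = (j : ℕ))

/-- The suspension of a graph `G`, obtained by attaching a whisker `vᵢwᵢ` at
each vertex `vᵢ` of `G`; the copy `Sum.inl` carries `G` and `Sum.inr` carries
the whisker vertices. -/
def suspension {V : Type*} (G : SimpleGraph V) : SimpleGraph (V ⊕ V) :=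
  SimpleGraph.fromRel (fun x y =>
    match x, y with
    | .inl i, .inl j => G.Adj i j
    | .inl i, .inr j => i = j
    | _, _ => False)

namespace WEIaux

variable {A : Type*} [CommRing A] {V : Type*}

/-- Exponent vectors of monomials lying in the weighted edge ideal. -/
def covD (G : SimpleGraph V) (w : Sym2 V → ℕ) (μ : V →₀ ℕ) : Prop :=
  ∃ i j, G.Adj i j ∧ w s(i, j) ≤ μ i ∧ w s(i, j) ≤ μ j

theorem wEdgeIdeal_eq (G : SimpleGraph V) (w : Sym2 V → ℕ) :
    wEdgeIdeal A G w = Ideal.span ((fun μ => monomial μ (1 : A)) ''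
      {μ : V →₀ ℕ | ∃ i j, G.Adj i j ∧
        μ = Finsupp.single i (w s(i, j)) + Finsupp.single j (w s(i, j))}) := by
  unfold wEdgeIdeal
  congr 1
  ext m
  constructor
  · rintro ⟨i, j, hij, rfl⟩
    exact ⟨_, ⟨i, j, hij, rfl⟩,
      by rw [X_pow_eq_monomial, X_pow_eq_monomial, monomial_mul, one_mul]⟩
  · rintro ⟨μ, ⟨i, j, hij, rfl⟩, rfl⟩
    exact ⟨i, j, hij,
      by rw [X_pow_eq_monomial, X_pow_eq_monomial, monomial_mul, one_mul]⟩

theorem single_pair_le_iff {i j : V} (hij : i ≠ j) {n : ℕ} {μ : V →₀ ℕ} :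
    Finsupp.single i n + Finsupp.single j n ≤ μ ↔ n ≤ μ i ∧ n ≤ μ j := by
  rw [Finsupp.le_def]
  constructor
  · intro h
    refine ⟨?_, ?_⟩
    · have := h i
      simpa [Finsupp.add_apply, Finsupp.single_apply, hij, hij.symm] using this
    · have := h j
      simpa [Finsupp.add_apply, Finsupp.single_apply, hij, hij.symm] using this
  · rintro ⟨h1, h2⟩ v
    rcases eq_or_ne v i with rfl | hvi
    · simpa [Finsupp.add_apply, Finsupp.single_apply, hij, hij.symm] using h1
    rcases eq_or_ne v j with rfl | hvj
    · simpa [Finsupp.add_apply, Finsupp.single_apply, hij, hij.symm, Ne.symm hvi] using h2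
    · simp [Finsupp.add_apply, Finsupp.single_apply, Ne.symm hvi, Ne.symm hvj]

theorem mem_wEdgeIdeal_iff {G : SimpleGraph V} {w : Sym2 V → ℕ} {f : MvPolynomial V A} :
    f ∈ wEdgeIdeal A G w ↔ ∀ μ ∈ f.support, covD G w μ := by
  rw [wEdgeIdeal_eq, mem_ideal_span_monomial_image]
  refine forall₂_congr fun μ _ => ⟨?_, ?_⟩
  · rintro ⟨ν, ⟨i, j, hij, rfl⟩, hle⟩
    have h := (single_pair_le_iff hij.ne).mp hle
    exact ⟨i, j, hij, h.1, h.2⟩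
  · rintro ⟨i, j, hij, h1, h2⟩
    exact ⟨_, ⟨i, j, hij, rfl⟩, (single_pair_le_iff hij.ne).mpr ⟨h1, h2⟩⟩

theorem PPrime_eq (S : Finset V) :
    PPrime A S = Ideal.span (X '' (S : Set V)) := by
  unfold PPrime
  congr 1
  ext m
  constructor
  · rintro ⟨v, hv, rfl⟩; exact ⟨v, hv, rfl⟩
  · rintro ⟨v, hv, rfl⟩; exact ⟨v, hv, rfl⟩

theorem mem_PPrime_iff {S : Finset V} {f : MvPolynomial V A} :
    f ∈ PPrime A S ↔ ∀ μ ∈ f.support, ∃ v ∈ S, μ v ≠ 0 := by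
  rw [PPrime_eq, mem_ideal_span_X_image]
  simp

theorem X_mem_PPrime {S : Finset V} {v : V} (hv : v ∈ S) : X v ∈ PPrime A S :=
  Ideal.subset_span ⟨v, hv, rfl⟩

section LexStuff
variable [LinearOrder V]

set_option maxHeartbeats 1000000 in
theorem lex_add_cancel {p q p₀ q₀ : V →₀ ℕ} (h : p + q = p₀ + q₀)
    (h1 : toLex p₀ ≤ toLex p) (h2 : toLex q₀ ≤ toLex q) : p = p₀ ∧ q = q₀ := by
  rcases eq_or_ne p p₀ with rfl | hne
  · exact ⟨rfl, add_left_cancel h⟩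
  · exfalso
    have hlt : toLex p₀ < toLex p := h1.lt_of_ne fun hc => hne (toLex.injective hc).symm
    have h3 : toLex (p₀ + q₀) < toLex (p + q) := add_lt_add_of_lt_of_le hlt h2
    rw [h] at h3
    exact lt_irrefl _ h3

end LexStuff

set_option maxHeartbeats 1000000 in
theorem coeff_mul_of_unique {f g : MvPolynomial V A} {μ ν : V →₀ ℕ}
    (h : ∀ p q, p + q = μ + ν → coeff p f ≠ 0 → coeff q g ≠ 0 → p = μ ∧ q = ν) :
    coeff (μ + ν) (f * g) = coeff μ f * coeff ν g := by
  classical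
  rw [coeff_mul]
  apply Finset.sum_eq_single (μ, ν)
  · rintro ⟨p, q⟩ hpq hne
    rw [Finset.HasAntidiagonal.mem_antidiagonal] at hpq
    by_cases hp : coeff p f = 0
    · rw [hp, zero_mul]
    by_cases hq : coeff q g = 0
    · rw [hq, mul_zero]
    obtain ⟨h1, h2⟩ := h p q hpq hp hq
    exact absurd (by rw [h1, h2]) hne
  · intro hmem
    simp at hmem

set_option maxHeartbeats 1000000 in
theorem lex_min_pow [LinearOrder V] {r : MvPolynomial V A} {μ₁ : V →₀ ℕ}
    (hmin : ∀ p ∈ r.support, toLex μ₁ ≤ toLex p) (n : ℕ) :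
    coeff (n • μ₁) (r ^ n) = coeff μ₁ r ^ n ∧
      ∀ p ∈ (r ^ n).support, toLex (n • μ₁) ≤ toLex p := by
  classical
  induction n with
  | zero =>
    refine ⟨by simp, fun p hp => ?_⟩
    rw [pow_zero, MvPolynomial.mem_support_iff] at hp
    have hp0 : p = 0 := by
      by_contra hne
      exact hp (by simp [coeff_one, hne, Ne.symm hne])
    subst hp0
    rw [zero_smul]
  | succ n ih =>
    have hle : ∀ p ∈ (r ^ n * r).support, toLex (n • μ₁ + μ₁) ≤ toLex p := by
      intro p hp
      obtain ⟨a, ha, b, hb, rfl⟩ := Finset.mem_add.mp (support_mul _ _ hp)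
      exact add_le_add (ih.2 a ha) (hmin b hb)
    rw [succ_nsmul, pow_succ, pow_succ]
    refine ⟨?_, hle⟩
    rw [coeff_mul_of_unique, ih.1]
    intro p q hsum hp hq
    exact lex_add_cancel hsum (ih.2 p (MvPolynomial.mem_support_iff.mpr hp))
      (hmin q (MvPolynomial.mem_support_iff.mpr hq))

theorem support_mul_monomial_subset {f : MvPolynomial V A} {a : V →₀ ℕ} {c : A} {μ : V →₀ ℕ}
    (hμ : μ ∈ (f * monomial a c).support) : ∃ ν ∈ f.support, μ = ν + a := by
  classical
  rw [MvPolynomial.mem_support_iff, coeff_mul_monomial'] at hμ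
  by_cases h : a ≤ μ
  · rw [if_pos h] at hμ
    refine ⟨μ - a, ?_, (tsub_add_cancel_of_le h).symm⟩
    rw [MvPolynomial.mem_support_iff]
    exact fun hc => hμ (by rw [hc, zero_mul])
  · rw [if_neg h] at hμ; exact absurd rfl hμ

theorem exists_purge (G : SimpleGraph V) (w : Sym2 V → ℕ) (f : MvPolynomial V A) :
    ∃ f' : MvPolynomial V A, f - f' ∈ wEdgeIdeal A G w ∧
      ∀ μ, (covD G w μ → coeff μ f' = 0) ∧ (¬ covD G w μ → coeff μ f' = coeff μ f) := by
  classical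
  have key : ∀ μ, coeff μ (∑ ν ∈ f.support.filter (fun ν => ¬ covD G w ν),
      monomial ν (coeff ν f)) = if μ ∈ f.support.filter (fun ν => ¬ covD G w ν)
        then coeff μ f else 0 := by
    intro μ
    rw [coeff_sum]
    simp_rw [coeff_monomial]
    exact Finset.sum_ite_eq' (f.support.filter (fun ν => ¬ covD G w ν)) μ (fun ν => coeff ν f)
  refine ⟨∑ ν ∈ f.support.filter (fun ν => ¬ covD G w ν), monomial ν (coeff ν f), ?_, fun μ => ⟨fun hc => ?_, fun hc => ?_⟩⟩
  · rw [mem_wEdgeIdeal_iff]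
    intro μ hμ
    by_contra hcov
    rw [MvPolynomial.mem_support_iff] at hμ
    apply hμ
    rw [coeff_sub, key μ]
    by_cases hs : μ ∈ f.support
    · rw [if_pos (Finset.mem_filter.mpr ⟨hs, hcov⟩), sub_self]
    · rw [if_neg (fun h => hs (Finset.mem_filter.mp h).1), sub_zero,
        MvPolynomial.notMem_support_iff.mp hs]
  · have hnotmem : μ ∉ f.support.filter (fun ν => ¬ covD G w ν) := by
      intro h
      exact (Finset.mem_filter.mp h).2 hc
    rw [key μ, if_neg hnotmem]
  · rw [key μ]
    by_cases hs : μ ∈ f.support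
    · rw [if_pos (Finset.mem_filter.mpr ⟨hs, hc⟩)]
    · rw [if_neg (fun h => hs (Finset.mem_filter.mp h).1),
        MvPolynomial.notMem_support_iff.mp hs]



theorem PPrime_isPrime [IsDomain A] [Fintype V] (S : Finset V) :
    (PPrime A S).IsPrime := by
  classical
  letI : LinearOrder V := LinearOrder.lift' (Fintype.equivFin V) (Fintype.equivFin V).injective
  constructor
  · intro htop
    have h1 : (1 : MvPolynomial V A) ∈ PPrime A S := htop ▸ Submodule.mem_top
    obtain ⟨v, hv, h0⟩ := mem_PPrime_iff.mp h1 0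
      (by rw [MvPolynomial.mem_support_iff]; simp)
    exact h0 rfl
  · intro f g hfg
    by_contra hcon
    push_neg at hcon
    obtain ⟨hf, hg⟩ := hcon
    have hex : ∀ h : MvPolynomial V A, h ∉ PPrime A S →
        ∃ μ, μ ∈ h.support ∧ ∀ v ∈ S, μ v = 0 := by
      intro h hh
      by_contra hc
      push_neg at hc
      exact hh (mem_PPrime_iff.mpr hc)
    obtain ⟨μ0, hμ0, hμ0S⟩ := hex f hf
    obtain ⟨ν0, hν0, hν0S⟩ := hex g hg
    have hFne : (f.support.filter (fun μ => ∀ v ∈ S, μ v = 0)).Nonempty :=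
      ⟨μ0, Finset.mem_filter.mpr ⟨hμ0, hμ0S⟩⟩
    have hGne : (g.support.filter (fun μ => ∀ v ∈ S, μ v = 0)).Nonempty :=
      ⟨ν0, Finset.mem_filter.mpr ⟨hν0, hν0S⟩⟩
    obtain ⟨μ, hμ, hμmin⟩ := Finset.exists_min_image _ toLex hFne
    obtain ⟨ν, hν, hνmin⟩ := Finset.exists_min_image _ toLex hGne
    obtain ⟨hμf, hμS⟩ := Finset.mem_filter.mp hμ
    obtain ⟨hνg, hνS⟩ := Finset.mem_filter.mp hν
    have hcoeff : coeff (μ + ν) (f * g) = coeff μ f * coeff ν g := by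
      apply coeff_mul_of_unique
      intro p q hsum hp hq
      have hpS : ∀ v ∈ S, p v = 0 := by
        intro v hv
        have : p v + q v = μ v + ν v := by
          have := congrArg (fun z => z v) hsum
          simpa [Finsupp.add_apply] using this
        rw [hμS v hv, hνS v hv] at this
        omega
      have hqS : ∀ v ∈ S, q v = 0 := by
        intro v hv
        have : p v + q v = μ v + ν v := by
          have := congrArg (fun z => z v) hsum
          simpa [Finsupp.add_apply] using this
        rw [hμS v hv, hνS v hv] at this
        omega
      exact lex_add_cancel hsum
        (hμmin p (Finset.mem_filter.mpr ⟨MvPolynomial.mem_support_iff.mpr hp, hpS⟩))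
        (hνmin q (Finset.mem_filter.mpr ⟨MvPolynomial.mem_support_iff.mpr hq, hqS⟩))
    have hmem : μ + ν ∈ (f * g).support := by
      rw [MvPolynomial.mem_support_iff, hcoeff]
      exact mul_ne_zero (MvPolynomial.mem_support_iff.mp hμf) (MvPolynomial.mem_support_iff.mp hνg)
    obtain ⟨v, hv, hnz⟩ := mem_PPrime_iff.mp hfg _ hmem
    apply hnz
    rw [Finsupp.add_apply, hμS v hv, hνS v hv]

theorem minWVC_exists_edge [Fintype V] {G : SimpleGraph V} {w : Sym2 V → ℕ} {S : Finset V}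
    {δ : V → ℕ} (h : IsMinWVC G w S δ) {v : V} (hv : v ∈ S) :
    ∃ u, G.Adj v u ∧ w s(v, u) = δ v ∧ ¬(u ∈ S ∧ δ u ≤ w s(v, u)) := by
  classical
  by_contra hcon
  push_neg at hcon
  obtain ⟨⟨hpos, hcov⟩, hmin⟩ := h
  set T : Finset V := Finset.univ.filter
      (fun u => G.Adj v u ∧ ¬(u ∈ S ∧ δ u ≤ w s(v, u))) with hT
  have hTmem : ∀ u, u ∈ T ↔ G.Adj v u ∧ ¬(u ∈ S ∧ δ u ≤ w s(v, u)) := by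
    intro u; simp [hT]
  rcases T.eq_empty_or_nonempty with hTe | hTne
  · have hTe' : ∀ u, G.Adj v u → u ∈ S ∧ δ u ≤ w s(v, u) := by
      intro u hadj
      by_contra hc
      have : u ∈ T := (hTmem u).mpr ⟨hadj, hc⟩
      rw [hTe] at this
      exact absurd this (Finset.notMem_empty u)
    have hcov' : IsWVC G w (S.erase v) δ := by
      refine ⟨fun u hu => hpos u (Finset.mem_of_mem_erase hu), fun i j hadj => ?_⟩
      rcases hcov i j hadj with ⟨hiS, hile⟩ | ⟨hjS, hjle⟩
      · rcases eq_or_ne v i with rfl | hne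
        · obtain ⟨hjS, hjle⟩ := hTe' j hadj
          exact Or.inr ⟨Finset.mem_erase.mpr ⟨hadj.ne', hjS⟩, hjle⟩
        · exact Or.inl ⟨Finset.mem_erase.mpr ⟨Ne.symm hne, hiS⟩, hile⟩
      · rcases eq_or_ne v j with rfl | hne
        · obtain ⟨hiS, hile⟩ := hTe' i hadj.symm
          refine Or.inl ⟨Finset.mem_erase.mpr ⟨hadj.ne, hiS⟩, ?_⟩
          rwa [Sym2.eq_swap] at hile
        · exact Or.inr ⟨Finset.mem_erase.mpr ⟨Ne.symm hne, hjS⟩, hjle⟩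
    have hle := hmin _ _ hcov' ⟨Finset.erase_subset _ _, fun _ _ => le_rfl⟩
    exact (Finset.notMem_erase v S) (hle.1 hv)
  · set W : Finset ℕ := T.image (fun u => w s(v, u)) with hW
    have hWne : W.Nonempty := hTne.image _
    set m : ℕ := W.min' hWne with hm
    have hub : ∀ u ∈ T, m ≤ w s(v, u) := fun u hu => W.min'_le _ (Finset.mem_image_of_mem _ hu)
    have hlb : ∀ u ∈ T, δ v ≤ w s(v, u) := by
      intro u hu
      obtain ⟨hadj, hnc⟩ := (hTmem u).mp hu
      rcases hcov v u hadj with ⟨_, hle⟩ | hcu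
      · exact hle
      · exact absurd hcu hnc
    have hne' : ∀ u ∈ T, w s(v, u) ≠ δ v := by
      intro u hu heq
      obtain ⟨hadj, hnc⟩ := (hTmem u).mp hu
      exact hnc (hcon u hadj heq)
    have hδm : δ v < m := by
      obtain ⟨u₀, hu₀, hu₀eq⟩ := Finset.mem_image.mp (W.min'_mem hWne)
      rw [hm] at *
      rw [← hu₀eq]
      exact lt_of_le_of_ne (hlb u₀ hu₀) (Ne.symm (hne' u₀ hu₀))
    set δ' := Function.update δ v m with hδ'
    have hδ'v : δ' v = m := Function.update_self v m δ
    have hδ'u : ∀ u, u ≠ v → δ' u = δ u := fun u hu => Function.update_of_ne hu m δ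
    have hWVC' : IsWVC G w S δ' := by
      refine ⟨fun u hu => ?_, fun i j hadj => ?_⟩
      · rcases eq_or_ne u v with rfl | hne
        · rw [hδ'v]; exact le_trans (hpos u hu) hδm.le
        · rw [hδ'u u hne]; exact hpos u hu
      · rcases hcov i j hadj with ⟨hiS, hile⟩ | ⟨hjS, hjle⟩
        · rcases eq_or_ne v i with rfl | hne
          · by_cases hjT : j ∈ T
            · exact Or.inl ⟨hiS, by rw [hδ'v]; exact hub j hjT⟩
            · have hnn : ¬¬(j ∈ S ∧ δ j ≤ w s(v, j)) := fun hc => hjT ((hTmem j).mpr ⟨hadj, hc⟩)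
              obtain ⟨hjS, hjle⟩ := not_not.mp hnn
              exact Or.inr ⟨hjS, by rw [hδ'u j hadj.ne']; exact hjle⟩
          · exact Or.inl ⟨hiS, by rw [hδ'u i (Ne.symm hne)]; exact hile⟩
        · rcases eq_or_ne v j with rfl | hne
          · by_cases hiT : i ∈ T
            · refine Or.inr ⟨hjS, ?_⟩
              rw [hδ'v, Sym2.eq_swap]
              exact hub i hiT
            · have hnn : ¬¬(i ∈ S ∧ δ i ≤ w s(v, i)) :=
                fun hc => hiT ((hTmem i).mpr ⟨hadj.symm, hc⟩)
              obtain ⟨hiS, hile⟩ := not_not.mp hnn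
              refine Or.inl ⟨hiS, ?_⟩
              rw [hδ'u i hadj.ne]
              rwa [Sym2.eq_swap] at hile
          · exact Or.inr ⟨hjS, by rw [hδ'u j (Ne.symm hne)]; exact hjle⟩
    have hle : WVCle S δ' S δ := by
      refine ⟨Finset.Subset.refl S, fun u hu => ?_⟩
      rcases eq_or_ne u v with rfl | hne
      · rw [hδ'v]; exact hδm.le
      · rw [hδ'u u hne]
    have hres := (hmin S δ' hWVC' hle).2 v hv
    rw [hδ'v] at hres
    exact absurd hres (not_le.mpr hδm)



theorem isAssociated_of_minWVC [IsDomain A] [Fintype V] {G : SimpleGraph V} {w : Sym2 V → ℕ}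
    {S : Finset V} {δ : V → ℕ} (h : IsMinWVC G w S δ) :
    IsAssociatedPrime (PPrime A S) (MvPolynomial V A ⧸ wEdgeIdeal A G w) := by
  classical
  set I := wEdgeIdeal A G w with hI
  set N : ℕ := (Finset.univ : Finset (Sym2 V)).sup w with hN
  have hNle : ∀ e : Sym2 V, w e ≤ N := fun e => Finset.le_sup (Finset.mem_univ e)
  set a : V →₀ ℕ := Finsupp.equivFunOnFinite.symm (fun v => if v ∈ S then δ v - 1 else N) with ha
  have haval : ∀ v, a v = if v ∈ S then δ v - 1 else N := fun v => rfl
  obtain ⟨⟨hpos, hcov⟩, -⟩ := id h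
  have halpha : ∀ v ∈ S, (X v : MvPolynomial V A) * monomial a 1 ∈ I := by
    intro v hv
    obtain ⟨u, hadj, hwu, hnc⟩ := minWVC_exists_edge h hv
    have hXm : (X v : MvPolynomial V A) * monomial a 1 = monomial (Finsupp.single v 1 + a) 1 := by
      rw [← pow_one (X v), X_pow_eq_monomial, monomial_mul, one_mul]
    rw [hXm, mem_wEdgeIdeal_iff]
    intro μ hμ
    rw [support_monomial, if_neg (one_ne_zero)] at hμ
    rw [Finset.mem_singleton] at hμ
    subst hμ
    refine ⟨v, u, hadj, ?_, ?_⟩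
    · have h1 : (Finsupp.single v 1 + a : V →₀ ℕ) v = 1 + a v := by
        rw [Finsupp.add_apply, Finsupp.single_eq_same]
      rw [h1, haval, if_pos hv, hwu]
      have := hpos v hv
      omega
    · have h2 : (Finsupp.single v 1 + a : V →₀ ℕ) u = a u := by
        rw [Finsupp.add_apply, Finsupp.single_eq_of_ne' hadj.ne]
        omega
      rw [h2, haval]
      by_cases huS : u ∈ S
      · rw [if_pos huS]
        have : ¬(δ u ≤ w s(v, u)) := fun hc => hnc ⟨huS, hc⟩
        omega
      · rw [if_neg huS]
        exact hNle _
  have hbeta : ∀ g : MvPolynomial V A, g * monomial a 1 ∈ I → g ∈ PPrime A S := by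
    intro g hg
    rw [mem_PPrime_iff]
    intro μ hμ
    have hmem : μ + a ∈ (g * monomial a 1).support := by
      rw [MvPolynomial.mem_support_iff, coeff_mul_monomial, mul_one]
      exact MvPolynomial.mem_support_iff.mp hμ
    obtain ⟨i, j, hadj, h1, h2⟩ := mem_wEdgeIdeal_iff.mp hg _ hmem
    rw [Finsupp.add_apply] at h1 h2
    rcases hcov i j hadj with ⟨hiS, hile⟩ | ⟨hjS, hjle⟩
    · refine ⟨i, hiS, ?_⟩
      have hai : a i = δ i - 1 := by rw [haval, if_pos hiS]
      have := hpos i hiS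
      omega
    · refine ⟨j, hjS, ?_⟩
      have haj : a j = δ j - 1 := by rw [haval, if_pos hjS]
      have := hpos j hjS
      omega
  have hcolon : PPrime A S ≤ I.colon
      ((Ideal.span {monomial a 1} : Ideal (MvPolynomial V A)) : Set (MvPolynomial V A)) := by
    rw [PPrime_eq, Ideal.span_le]
    rintro x ⟨v, hv, rfl⟩
    rw [SetLike.mem_coe, Ideal.mem_colon_span_singleton]
    exact halpha v hv
  refine ⟨PPrime_isPrime S, Ideal.Quotient.mk I (monomial a 1), ?_⟩
  suffices hsuff : PPrime A S =
      (⊥ : Submodule _ (MvPolynomial V A ⧸ I)).colon {Ideal.Quotient.mk I (monomial a 1)} by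
    rw [← hsuff, (PPrime_isPrime S).radical]
  ext r
  rw [Submodule.mem_colon_singleton, Submodule.mem_bot]
  have hsm : r • Ideal.Quotient.mk I (monomial a 1) = Ideal.Quotient.mk I (r * monomial a 1) :=
    rfl
  rw [hsm, Ideal.Quotient.eq_zero_iff_mem]
  constructor
  · intro hr
    exact Ideal.mem_colon_span_singleton.mp (hcolon hr)
  · exact fun hr => hbeta r hr



set_option maxHeartbeats 2000000 in
theorem assoc_to_minWVC [IsDomain A] [Fintype V] {G : SimpleGraph V} {w : Sym2 V → ℕ}
    {P : Ideal (MvPolynomial V A)}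
    (hP : IsAssociatedPrime P (MvPolynomial V A ⧸ wEdgeIdeal A G w)) :
    ∃ S δ', IsMinWVC G w S δ' ∧ P = PPrime A S := by
  classical
  letI : LinearOrder V := LinearOrder.lift' (Fintype.equivFin V) (Fintype.equivFin V).injective
  obtain ⟨hprime, x, hann⟩ := hP
  obtain ⟨f₀, hf₀⟩ := Ideal.Quotient.mk_surjective x
  subst hf₀
  set I := wEdgeIdeal A G w with hI
  set Good : MvPolynomial V A → Prop := fun g => ∀ r, r ∈ P ↔ ∃ n : ℕ, r ^ n * g ∈ I with hGood
  have hgood₀ : Good f₀ := by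
    intro r
    rw [hann, Ideal.mem_radical_iff]
    refine exists_congr fun n => ?_
    rw [Submodule.mem_colon_singleton, Submodule.mem_bot,
      show r ^ n • Ideal.Quotient.mk I f₀ = Ideal.Quotient.mk I (r ^ n * f₀) from rfl,
      Ideal.Quotient.eq_zero_iff_mem]
  have hGoodmul : ∀ g t, Good g → t ∉ P → Good (t * g) := by
    intro g t hg ht r
    constructor
    · intro hr
      obtain ⟨n, hn⟩ := (hg r).mp hr
      refine ⟨n, ?_⟩
      have h2 : t * (r ^ n * g) ∈ I := I.mul_mem_left t hn
      rwa [mul_left_comm] at h2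
    · rintro ⟨n, hn⟩
      rw [← mul_assoc] at hn
      rcases hprime.mem_or_mem ((hg (r ^ n * t)).mpr ⟨1, by rwa [pow_one]⟩) with h | h
      · exact hprime.mem_of_pow_mem n h
      · exact absurd h ht
  have hGoodsub : ∀ g g', Good g → g - g' ∈ I → Good g' := by
    intro g g' hg hsub r
    rw [hg r]
    refine exists_congr fun n => ?_
    constructor
    · intro h
      have h2 := I.sub_mem h (I.mul_mem_left (r ^ n) hsub)
      rwa [← mul_sub, sub_sub_cancel] at h2
    · intro h
      have h2 := I.add_mem h (I.mul_mem_left (r ^ n) hsub)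
      have h3 : r ^ n * g' + r ^ n * (g - g') = r ^ n * g := by ring
      rwa [h3] at h2
  have hGoodI : ∀ g, Good g → g ∉ I := by
    intro g hg hgI
    apply hprime.ne_top
    rw [Ideal.eq_top_iff_one]
    exact (hg 1).mpr ⟨1, by rwa [one_pow, one_mul]⟩
  set Qp : ℕ → Prop := fun n => ∃ g, Good g ∧ (∀ μ ∈ g.support, ¬ covD G w μ) ∧
      g.support.card = n with hQp
  have hQpex : ∃ n, Qp n := by
    obtain ⟨g', hsub, hco⟩ := exists_purge G w f₀
    refine ⟨g'.support.card, g', hGoodsub f₀ g' hgood₀ hsub, fun μ hμ hc => ?_, rfl⟩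
    exact (MvPolynomial.mem_support_iff.mp hμ) ((hco μ).1 hc)
  obtain ⟨f, hGoodf, hfpurged, hfcard⟩ := Nat.find_spec hQpex
  have hfI : f ∉ I := hGoodI f hGoodf
  have hfne : f ≠ 0 := fun hc => hfI (hc ▸ I.zero_mem)
  have hfsupp : f.support.Nonempty := Finset.nonempty_iff_ne_empty.mpr
    (fun hc => hfne (MvPolynomial.support_eq_empty.mp hc))
  obtain ⟨ν₁, hν₁, hν₁min⟩ := Finset.exists_min_image f.support toLex hfsupp
  -- every "term" of an element of P lies in P
  have hterm : ∀ n (r : MvPolynomial V A), r.support.card ≤ n → r ∈ P →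
      ∀ μ, monomial μ (coeff μ r) ∈ P := by
    intro n
    induction n with
    | zero =>
      intro r hcard _ μ
      have hr0 : r = 0 := by
        rw [← MvPolynomial.support_eq_empty, ← Finset.card_eq_zero]
        omega
      rw [hr0, coeff_zero, map_zero]
      exact P.zero_mem
    | succ n ih =>
      intro r hcard hrP μ
      rcases eq_or_ne r 0 with rfl | hr0
      · rw [coeff_zero, map_zero]
        exact P.zero_mem
      have hrsupp : r.support.Nonempty := Finset.nonempty_iff_ne_empty.mpr
        (fun hc => hr0 (MvPolynomial.support_eq_empty.mp hc))
      obtain ⟨μ₁, hμ₁, hμ₁min⟩ := Finset.exists_min_image r.support toLex hrsupp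
      have ht1 : monomial μ₁ (coeff μ₁ r) ∈ P := by
        by_contra htP
        obtain ⟨k, hrk⟩ := (hGoodf r).mp hrP
        obtain ⟨hpk1, hpk2⟩ := lex_min_pow hμ₁min k
        have htP' : monomial (k • μ₁) (coeff μ₁ r ^ k) ∉ P := by
          rw [← monomial_pow]
          exact fun hc => htP (hprime.mem_of_pow_mem k hc)
        have hGt : Good (monomial (k • μ₁) (coeff μ₁ r ^ k) * f) :=
          hGoodmul f _ hGoodf htP'
        obtain ⟨g', hsub, hco⟩ := exists_purge G w (monomial (k • μ₁) (coeff μ₁ r ^ k) * f)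
        have hGg' : Good g' := hGoodsub _ g' hGt hsub
        have hpu : ∀ σ ∈ g'.support, ¬ covD G w σ := fun σ hσ hc =>
          (MvPolynomial.mem_support_iff.mp hσ) ((hco σ).1 hc)
        have hDkey : covD G w (k • μ₁ + ν₁) := by
          have hco' : coeff (k • μ₁ + ν₁) (r ^ k * f) =
              coeff (k • μ₁) (r ^ k) * coeff ν₁ f := by
            apply coeff_mul_of_unique
            intro p q hsum hp hq
            exact lex_add_cancel hsum (hpk2 p (MvPolynomial.mem_support_iff.mpr hp))
              (hν₁min q (MvPolynomial.mem_support_iff.mpr hq))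
          have hnz : coeff (k • μ₁ + ν₁) (r ^ k * f) ≠ 0 := by
            rw [hco', hpk1]
            exact mul_ne_zero (pow_ne_zero k (MvPolynomial.mem_support_iff.mp hμ₁))
              (MvPolynomial.mem_support_iff.mp hν₁)
          exact mem_wEdgeIdeal_iff.mp hrk _ (MvPolynomial.mem_support_iff.mpr hnz)
        have hcard' : g'.support.card < Nat.find hQpex := by
          have hsub2 : g'.support ⊆ (f.support.erase ν₁).image (fun ν => ν + k • μ₁) := by
            intro σ hσ
            have hnc := hpu σ hσ
            have hσ2 : σ ∈ (monomial (k • μ₁) (coeff μ₁ r ^ k) * f).support := by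
              rw [MvPolynomial.mem_support_iff] at hσ ⊢
              rw [(hco σ).2 hnc] at hσ
              exact hσ
            rw [mul_comm] at hσ2
            obtain ⟨ν, hν, hσeq⟩ := support_mul_monomial_subset hσ2
            refine Finset.mem_image.mpr ⟨ν, Finset.mem_erase.mpr ⟨?_, hν⟩, hσeq.symm⟩
            rintro rfl
            exact hnc (by rw [hσeq, add_comm]; exact hDkey)
          calc g'.support.card
              ≤ ((f.support.erase ν₁).image (fun ν => ν + k • μ₁)).card :=
                Finset.card_le_card hsub2
            _ ≤ (f.support.erase ν₁).card := Finset.card_image_le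
            _ = f.support.card - 1 := Finset.card_erase_of_mem hν₁
            _ < Nat.find hQpex := by
                have h1 : 1 ≤ f.support.card := Finset.card_pos.mpr hfsupp
                omega
        exact Nat.find_min hQpex hcard' ⟨g', hGg', hpu, rfl⟩
      rcases eq_or_ne μ μ₁ with rfl | hμne
      · exact ht1
      · have hsubP : r - monomial μ₁ (coeff μ₁ r) ∈ P := P.sub_mem hrP ht1
        have hcoeq : coeff μ (r - monomial μ₁ (coeff μ₁ r)) = coeff μ r := by
          rw [coeff_sub, coeff_monomial, if_neg (fun hc => hμne hc.symm), sub_zero]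
        have hcard2 : (r - monomial μ₁ (coeff μ₁ r)).support.card ≤ n := by
          have hss : (r - monomial μ₁ (coeff μ₁ r)).support ⊆ r.support.erase μ₁ := by
            intro σ hσ
            rw [MvPolynomial.mem_support_iff, coeff_sub, coeff_monomial] at hσ
            rcases eq_or_ne μ₁ σ with rfl | hne2
            · rw [if_pos rfl, sub_self] at hσ
              exact absurd rfl hσ
            · rw [if_neg hne2, sub_zero] at hσ
              exact Finset.mem_erase.mpr ⟨Ne.symm hne2, MvPolynomial.mem_support_iff.mpr hσ⟩
          calc (r - monomial μ₁ (coeff μ₁ r)).support.card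
              ≤ (r.support.erase μ₁).card := Finset.card_le_card hss
            _ = r.support.card - 1 := Finset.card_erase_of_mem hμ₁
            _ ≤ n := by omega
        have hres := ih _ hcard2 hsubP μ
        rwa [hcoeq] at hres
  -- P is generated by the variables it contains
  set S₀ : Finset V := Finset.univ.filter (fun v => X v ∈ P) with hS₀
  have hS₀mem : ∀ v, v ∈ S₀ ↔ X v ∈ P := by
    intro v
    simp [hS₀]
  have hCnot : ∀ c : A, c ≠ 0 → C c ∉ P := by
    intro c hc hCc
    obtain ⟨n, h1⟩ := (hGoodf _).mp hCc
    rw [← map_pow] at h1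
    have h2 : coeff ν₁ (C (c ^ n) * f) ≠ 0 := by
      rw [coeff_C_mul]
      exact mul_ne_zero (pow_ne_zero n hc) (MvPolynomial.mem_support_iff.mp hν₁)
    exact hfpurged ν₁ hν₁ (mem_wEdgeIdeal_iff.mp h1 ν₁ (MvPolynomial.mem_support_iff.mpr h2))
  have hmonP : ∀ (μ : V →₀ ℕ) (c : A), c ≠ 0 → monomial μ c ∈ P →
      ∃ v, μ v ≠ 0 ∧ X v ∈ P := by
    intro μ c hc hmem
    rw [monomial_eq] at hmem
    rcases hprime.mem_or_mem hmem with h | h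
    · exact absurd h (hCnot c hc)
    · have h' : ∏ v ∈ μ.support, (X v ^ μ v : MvPolynomial V A) ∈ P := h
      haveI := hprime
      obtain ⟨v, hv, hvP⟩ := Ideal.IsPrime.prod_mem_iff.mp h'
      refine ⟨v, Finsupp.mem_support_iff.mp hv, ?_⟩
      exact (hprime.pow_mem_iff_mem (μ v)
        (Nat.pos_of_ne_zero (Finsupp.mem_support_iff.mp hv))).mp hvP
  have hPP : P = PPrime A S₀ := by
    apply le_antisymm
    · intro r hr
      rw [mem_PPrime_iff]
      intro μ hμ
      obtain ⟨v, hv, hvP⟩ := hmonP μ (coeff μ r) (MvPolynomial.mem_support_iff.mp hμ)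
        (hterm r.support.card r le_rfl hr μ)
      exact ⟨v, (hS₀mem v).mpr hvP, hv⟩
    · rw [PPrime_eq, Ideal.span_le]
      rintro y ⟨v, hv, rfl⟩
      exact (hS₀mem v).mp (by simpa using hv)
  -- a monomial witness
  have hν₀ex : ∃ ν₀ ∈ f.support, ∀ g : MvPolynomial V A, g * monomial ν₀ 1 ∈ I → g ∈ P := by
    by_contra hcon
    push_neg at hcon
    choose gg hgI hgP using hcon
    set Gprod : MvPolynomial V A := ∏ ν ∈ f.support.attach, gg ν.1 ν.2 with hGprod
    have hGf : Gprod * f ∈ I := by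
      have hexp : Gprod * f = ∑ ν ∈ f.support, Gprod * monomial ν (coeff ν f) := by
        conv_lhs => rw [as_sum f]
        rw [Finset.mul_sum]
      rw [hexp]
      apply Ideal.sum_mem
      intro ν hν
      have hfac : Gprod = gg ν hν * ∏ y ∈ f.support.attach.erase ⟨ν, hν⟩, gg y.1 y.2 :=
        (Finset.mul_prod_erase _ _ (Finset.mem_attach _ ⟨ν, hν⟩)).symm
      have hmc : (monomial ν (coeff ν f) : MvPolynomial V A) =
          monomial ν 1 * C (coeff ν f) := by
        rw [C_apply, monomial_mul, add_zero, one_mul]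
      have heq : Gprod * monomial ν (coeff ν f) =
          ((∏ y ∈ f.support.attach.erase ⟨ν, hν⟩, gg y.1 y.2) * C (coeff ν f)) *
            (gg ν hν * monomial ν 1) := by
        rw [hfac, hmc]
        ring
      rw [heq]
      exact I.mul_mem_left _ (hgI ν hν)
    have hGP : Gprod ∈ P := (hGoodf Gprod).mpr ⟨1, by rwa [pow_one]⟩
    haveI := hprime
    obtain ⟨y, _, hyP⟩ := Ideal.IsPrime.prod_mem_iff.mp hGP
    exact hgP y.1 y.2 hyP
  obtain ⟨ν₀', hν₀f, hν₀'⟩ := hν₀ex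
  set Q : (V →₀ ℕ) → Prop := fun ν => ∀ g : MvPolynomial V A, g * monomial ν 1 ∈ I → g ∈ P
    with hQ
  have hQcov : ∀ ν, Q ν → ¬ covD G w ν := by
    intro ν hν hc
    apply hprime.ne_top
    rw [Ideal.eq_top_iff_one]
    apply hν
    rw [one_mul, mem_wEdgeIdeal_iff]
    intro σ hσ
    rw [support_monomial, if_neg one_ne_zero, Finset.mem_singleton] at hσ
    rw [hσ]; exact hc
  have hnn : ∀ v, ∃ n : ℕ, v ∈ S₀ → covD G w (Finsupp.single v n + ν₀') := by
    intro v
    by_cases hv : v ∈ S₀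
    · obtain ⟨n, hn⟩ := (hGoodf (X v)).mp ((hS₀mem v).mp hv)
      refine ⟨n, fun _ => ?_⟩
      rw [X_pow_eq_monomial] at hn
      have hc : coeff (Finsupp.single v n + ν₀')
          (monomial (Finsupp.single v n) (1 : A) * f) ≠ 0 := by
        rw [coeff_monomial_mul, one_mul]
        exact MvPolynomial.mem_support_iff.mp hν₀f
      exact mem_wEdgeIdeal_iff.mp hn _ (MvPolynomial.mem_support_iff.mpr hc)
    · exact ⟨0, fun h => absurd h hv⟩
  choose nn hnn using hnn
  have hbound : ∀ ν, Q ν → (∀ u, ν₀' u ≤ ν u) → ∀ v ∈ S₀, ν v < ν₀' v + nn v := by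
    intro ν hν hle v hv
    by_contra hlt
    apply hQcov ν hν
    obtain ⟨i, j, hadj, h1, h2⟩ := hnn v hv
    have hmono : ∀ u, (Finsupp.single v (nn v) + ν₀') u ≤ ν u := by
      intro u
      rw [Finsupp.add_apply, Finsupp.single_apply]
      split_ifs with huv
      · subst huv; omega
      · rw [zero_add]; exact hle u
    exact ⟨i, j, hadj, h1.trans (hmono i), h2.trans (hmono j)⟩
  have hνex : ∃ ν, Q ν ∧ ∀ v ∈ S₀, ¬ Q (ν + Finsupp.single v 1) := by
    by_contra hcon
    have hstep : ∀ ν, Q ν → ∃ v ∈ S₀, Q (ν + Finsupp.single v 1) := by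
      intro ν hν
      by_contra h
      exact hcon ⟨ν, hν, fun v hv hq => h ⟨v, hv, hq⟩⟩
    have hiter : ∀ k : ℕ, ∃ ν, Q ν ∧ (∀ u, ν₀' u ≤ ν u) ∧
        (∑ u ∈ S₀, ν₀' u) + k ≤ ∑ u ∈ S₀, ν u := by
      intro k
      induction k with
      | zero => exact ⟨ν₀', hν₀', fun u => le_rfl, le_rfl⟩
      | succ k ih =>
        obtain ⟨ν, hν, hle, hsum⟩ := ih
        obtain ⟨v, hv, hq⟩ := hstep ν hν
        refine ⟨ν + Finsupp.single v 1, hq, fun u => (hle u).trans ?_, ?_⟩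
        · rw [Finsupp.add_apply]; exact Nat.le_add_right _ _
        · have hlt : ∑ u ∈ S₀, ν u < ∑ u ∈ S₀, (ν + Finsupp.single v 1 : V →₀ ℕ) u := by
            apply Finset.sum_lt_sum
            · intro u _
              rw [Finsupp.add_apply]; exact Nat.le_add_right _ _
            · exact ⟨v, hv, by rw [Finsupp.add_apply, Finsupp.single_eq_same]; omega⟩
          omega
    obtain ⟨ν, hν, hle, hsum⟩ := hiter (∑ u ∈ S₀, nn u + 1)
    have hb : ∑ u ∈ S₀, ν u ≤ ∑ u ∈ S₀, (ν₀' u + nn u) :=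
      Finset.sum_le_sum fun u hu => (hbound ν hν hle u hu).le
    rw [Finset.sum_add_distrib] at hb
    omega
  obtain ⟨ν₀, hν₀, hmax⟩ := hνex
  -- the minimal weighted vertex cover
  have hwvc : IsWVC G w S₀ (fun v => ν₀ v + 1) := by
    refine ⟨fun v _ => Nat.succ_le_succ (Nat.zero_le _), fun i j hadj => ?_⟩
    by_contra hcon
    push_neg at hcon
    obtain ⟨hcon1, hcon2⟩ := hcon
    set μ : V →₀ ℕ := Finsupp.equivFunOnFinite.symm
        (fun v => if (v = i ∧ i ∉ S₀) ∨ (v = j ∧ j ∉ S₀) then w s(i, j) else 0) with hμdef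
    have hμval : ∀ v, μ v =
        if (v = i ∧ i ∉ S₀) ∨ (v = j ∧ j ∉ S₀) then w s(i, j) else 0 := fun v => rfl
    have hgm : (monomial μ (1:A)) * monomial ν₀ 1 ∈ I := by
      rw [monomial_mul, mul_one, mem_wEdgeIdeal_iff]
      intro σ hσ
      rw [support_monomial, if_neg one_ne_zero, Finset.mem_singleton] at hσ
      subst hσ
      refine ⟨i, j, hadj, ?_, ?_⟩
      · have h1 : (μ + ν₀ : V →₀ ℕ) i = μ i + ν₀ i := Finsupp.add_apply μ ν₀ i
        rw [h1, hμval i]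
        by_cases hiS : i ∈ S₀
        · rw [if_neg (by simp [hiS, hadj.ne])]
          have hh : w s(i, j) < ν₀ i + 1 := hcon1 hiS
          omega
        · rw [if_pos (Or.inl ⟨rfl, hiS⟩)]
          omega
      · have h1 : (μ + ν₀ : V →₀ ℕ) j = μ j + ν₀ j := Finsupp.add_apply μ ν₀ j
        rw [h1, hμval j]
        by_cases hjS : j ∈ S₀
        · rw [if_neg (by simp [hjS, hadj.ne'])]
          have hh : w s(i, j) < ν₀ j + 1 := hcon2 hjS
          omega
        · rw [if_pos (Or.inr ⟨rfl, hjS⟩)]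
          omega
    have hμP : (monomial μ (1:A)) ∈ P := hν₀ _ hgm
    rw [hPP, mem_PPrime_iff] at hμP
    obtain ⟨v, hvS, hvnz⟩ := hμP μ (by
      rw [support_monomial, if_neg one_ne_zero]
      exact Finset.mem_singleton_self _)
    rw [hμval v] at hvnz
    rcases Decidable.em ((v = i ∧ i ∉ S₀) ∨ (v = j ∧ j ∉ S₀)) with hd | hd
    · rcases hd with ⟨rfl, hiS⟩ | ⟨rfl, hjS⟩
      · exact hiS hvS
      · exact hjS hvS
    · rw [if_neg hd] at hvnz
      exact hvnz rfl
  have hminimal : ∀ T ε, IsWVC G w T ε → WVCle T ε S₀ (fun v => ν₀ v + 1) →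
      WVCle S₀ (fun v => ν₀ v + 1) T ε := by
    intro T ε hTε hle
    obtain ⟨hTsub, hεle⟩ := hle
    have key : ∀ v ∈ S₀, v ∈ T ∧ ε v ≤ ν₀ v + 1 := by
      intro v hv
      obtain ⟨g, hgI, hgP⟩ : ∃ g : MvPolynomial V A,
          g * monomial (ν₀ + Finsupp.single v 1) 1 ∈ I ∧ g ∉ P := by
        by_contra hc
        push_neg at hc
        exact hmax v hv hc
      rw [hPP, mem_PPrime_iff] at hgP
      push_neg at hgP
      obtain ⟨σ, hσ, hσ0⟩ := hgP
      have hcd : covD G w (σ + (ν₀ + Finsupp.single v 1)) := by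
        apply mem_wEdgeIdeal_iff.mp hgI
        rw [MvPolynomial.mem_support_iff, coeff_mul_monomial, mul_one]
        exact MvPolynomial.mem_support_iff.mp hσ
      obtain ⟨i, j, hadj, h1, h2⟩ := hcd
      have h1' : w s(i, j) ≤ σ i + Finsupp.single v 1 i + ν₀ i := by
        rw [Finsupp.add_apply, Finsupp.add_apply] at h1; omega
      have h2' : w s(i, j) ≤ σ j + Finsupp.single v 1 j + ν₀ j := by
        rw [Finsupp.add_apply, Finsupp.add_apply] at h2; omega
      rcases hwvc.2 i j hadj with ⟨hiS, hile⟩ | ⟨hjS, hjle⟩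
      · have hile' : ν₀ i + 1 ≤ w s(i, j) := hile
        have hσi : σ i = 0 := hσ0 i hiS
        have hvi : v = i := by
          by_contra hvi
          rw [Finsupp.single_eq_of_ne' hvi] at h1'
          omega
        have hsv : Finsupp.single v 1 i = 1 := by rw [hvi, Finsupp.single_eq_same]
        have hweq : w s(i, j) = ν₀ i + 1 := by
          rw [hsv] at h1'
          omega
        rcases hTε.2 i j hadj with ⟨hiT, hεi⟩ | ⟨hjT, hεj⟩
        · refine ⟨hvi ▸ hiT, ?_⟩
          rw [hvi]
          omega
        · exfalso
          have hjS₀ : j ∈ S₀ := hTsub hjT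
          have hσj : σ j = 0 := hσ0 j hjS₀
          have h3 : ν₀ j + 1 ≤ ε j := hεle j hjT
          have hvj : v ≠ j := by
            rw [hvi]
            exact hadj.ne
          rw [Finsupp.single_eq_of_ne' hvj] at h2'
          omega
      · have hjle' : ν₀ j + 1 ≤ w s(i, j) := hjle
        have hσj : σ j = 0 := hσ0 j hjS
        have hvj : v = j := by
          by_contra hvj
          rw [Finsupp.single_eq_of_ne' hvj] at h2'
          omega
        have hsv : Finsupp.single v 1 j = 1 := by rw [hvj, Finsupp.single_eq_same]
        have hweq : w s(i, j) = ν₀ j + 1 := by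
          rw [hsv] at h2'
          omega
        rcases hTε.2 i j hadj with ⟨hiT, hεi⟩ | ⟨hjT, hεj⟩
        · exfalso
          have hiS₀ : i ∈ S₀ := hTsub hiT
          have hσi : σ i = 0 := hσ0 i hiS₀
          have h3 : ν₀ i + 1 ≤ ε i := hεle i hiT
          have hvi : v ≠ i := by
            rw [hvj]
            exact hadj.ne'
          rw [Finsupp.single_eq_of_ne' hvi] at h1'
          omega
        · refine ⟨hvj ▸ hjT, ?_⟩
          rw [hvj]
          omega
    exact ⟨fun v hv => (key v hv).1, fun v hv => (key v hv).2⟩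
  exact ⟨S₀, fun v => ν₀ v + 1, ⟨hwvc, hminimal⟩, hPP⟩

end WEIaux


set_option synthInstance.maxHeartbeats 1000000 in
/-- the associated primes of `R/I(G_ω)` are the ideals `P(V')`
such that `(V', δ')` is a minimal weighted vertex cover for some `δ'`. -/
theorem stmt_6 (A : Type*) [CommRing A] [IsDomain A] {V : Type*} [Fintype V]
    (G : SimpleGraph V) (w : Sym2 V → ℕ) (hw : ∀ e ∈ G.edgeSet, 1 ≤ w e) :
    associatedPrimes (MvPolynomial V A) (MvPolynomial V A ⧸ wEdgeIdeal A G w) =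
      {P | ∃ (S : Finset V) (δ : V → ℕ), IsMinWVC G w S δ ∧ P = PPrime A S} := by
  ext P
  constructor
  · intro hP
    obtain ⟨S, δ', hmin, hPP⟩ := WEIaux.assoc_to_minWVC hP
    exact ⟨S, δ', hmin, hPP⟩
  · rintro ⟨S, δ', hmin, rfl⟩
    exact WEIaux.isAssociated_of_minWVC hmin
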